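/- Let G, B be real symmetric matrices with common null space span{𝟙} and rank n-1, with G positive definite on 𝟙ᗮ. Then (G + B G† B)† · B G† = (B + G B† G)† whenever B is also invertible on 𝟙ᗮ. -/
import Mathlib


open Matrix

/-- `Ad` is the Moore–Penrose pseudoinverse of `A` (the four Penrose conditions). -/
def IsMoorePenrose {n : ℕ} (A Ad : Matrix (Fin n) (Fin n) ℝ) : Prop :=
  A * Ad * A = A ∧ Ad * A * Ad = Ad ∧ (A * Ad)ᵀ = A * Ad ∧ (Ad * A)ᵀ = Ad * A

section Aux

variable {n : ℕ}

/-- Uniqueness of the Moore–Penrose pseudoinverse. -/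
lemma RRPI.mp_unique {A X Y : Matrix (Fin n) (Fin n) ℝ}
    (hX : IsMoorePenrose A X) (hY : IsMoorePenrose A Y) : X = Y := by
  obtain ⟨hx1, hx2, hx3, hx4⟩ := hX
  obtain ⟨hy1, hy2, hy3, hy4⟩ := hY
  have e1 : (A * Y) * (A * X) = A * X := by rw [← mul_assoc, hy1]
  have e2 : (A * X) * (A * Y) = A * Y := by rw [← mul_assoc, hx1]
  have e3 : (X * A) * (Y * A) = X * A := by
    rw [mul_assoc, ← mul_assoc A Y A, hy1]
  have e4 : (Y * A) * (X * A) = Y * A := by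
    rw [mul_assoc, ← mul_assoc A X A, hx1]
  have hAX : A * X = A * Y := by
    calc A * X = ((A * Y) * (A * X))ᵀ := by rw [e1, hx3]
      _ = (A * X)ᵀ * (A * Y)ᵀ := transpose_mul _ _
      _ = (A * X) * (A * Y) := by rw [hx3, hy3]
      _ = A * Y := e2
  have hXA : X * A = Y * A := by
    calc X * A = (X * A) * (Y * A) := e3.symm
      _ = (X * A)ᵀ * (Y * A)ᵀ := by rw [hx4, hy4]
      _ = ((Y * A) * (X * A))ᵀ := (transpose_mul _ _).symm
      _ = (Y * A)ᵀ := by rw [e4]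
      _ = Y * A := hy4
  calc X = X * A * X := hx2.symm
    _ = Y := by rw [hXA, mul_assoc, hAX, ← mul_assoc, hy2]

/-- The pseudoinverse of a symmetric matrix is symmetric. -/
lemma RRPI.mp_symm {A Ad : Matrix (Fin n) (Fin n) ℝ} (hA : Aᵀ = A)
    (h : IsMoorePenrose A Ad) : Adᵀ = Ad := by
  obtain ⟨h1, h2, h3, h4⟩ := h
  refine RRPI.mp_unique (A := A) ?_ ⟨h1, h2, h3, h4⟩
  have e : A * Adᵀ = Ad * A := by rw [← hA, ← transpose_mul, h4, hA]
  have e' : Adᵀ * A = A * Ad := by rw [← hA, ← transpose_mul, h3, hA]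
  refine ⟨?_, ?_, ?_, ?_⟩
  · have := congrArg transpose h1
    simpa [transpose_mul, hA, mul_assoc] using this
  · have := congrArg transpose h2
    simpa [transpose_mul, hA, mul_assoc] using this
  · rw [e, h4]
  · rw [e', h3]

/-- A symmetric matrix commutes with its pseudoinverse. -/
lemma RRPI.mp_comm {A Ad : Matrix (Fin n) (Fin n) ℝ} (hA : Aᵀ = A)
    (h : IsMoorePenrose A Ad) : A * Ad = Ad * A := by
  have hs := RRPI.mp_symm hA h
  calc A * Ad = (A * Ad)ᵀ := h.2.2.1.symm
    _ = Adᵀ * Aᵀ := transpose_mul _ _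
    _ = Ad * A := by rw [hs, hA]

lemma RRPI.eq_zero_of_mulVec {A : Matrix (Fin n) (Fin n) ℝ}
    (h : ∀ v, A *ᵥ v = 0) : A = 0 := by
  ext i j
  have := congrFun (h (Pi.single j 1)) i
  simpa [mulVec_single] using this

/-- Absorption: if every kernel vector of `A` is constant and `M` kills the
constant vector, then `M * (Ad * A) = M`. -/
lemma RRPI.absorb {A Ad M : Matrix (Fin n) (Fin n) ℝ}
    (h1 : A * Ad * A = A)
    (hker : ∀ v, A *ᵥ v = 0 → ∃ c : ℝ, v = fun _ => c)
    (hM : M *ᵥ (fun _ => (1:ℝ)) = 0) :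
    M * (Ad * A) = M := by
  have hz : M * (1 - Ad * A) = 0 := by
    apply RRPI.eq_zero_of_mulVec
    intro v
    have hAw : A *ᵥ ((1 - Ad * A) *ᵥ v) = 0 := by
      rw [mulVec_mulVec]
      have hA0 : A * (1 - Ad * A) = 0 := by
        rw [mul_sub, mul_one, ← mul_assoc, h1, sub_self]
      rw [hA0, zero_mulVec]
    obtain ⟨c, hc⟩ := hker _ hAw
    rw [← mulVec_mulVec, hc]
    have hcs : (fun _ : Fin n => c) = c • (fun _ : Fin n => (1:ℝ)) := by
      funext i; simp
    rw [hcs, mulVec_smul, hM, smul_zero]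
  rw [mul_sub, mul_one, sub_eq_zero] at hz
  exact hz.symm

lemma RRPI.dot_symm {A : Matrix (Fin n) (Fin n) ℝ} (hA : Aᵀ = A)
    (v w : Fin n → ℝ) : v ⬝ᵥ (A *ᵥ w) = (A *ᵥ v) ⬝ᵥ w := by
  rw [dotProduct_mulVec, ← hA, vecMul_transpose, hA]

end Aux

theorem resistance_reactance_pinv_identity {n : ℕ} (hn : 1 ≤ n)
    (G B Gd Bd Rd Xd : Matrix (Fin n) (Fin n) ℝ)
    (hGsymm : G.IsSymm) (hBsymm : B.IsSymm)
    (hGrank : G.rank = n - 1) (hBrank : B.rank = n - 1)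
    (hGker : ∀ v : Fin n → ℝ, G *ᵥ v = 0 ↔ ∃ c : ℝ, v = fun _ => c)
    (hBker : ∀ v : Fin n → ℝ, B *ᵥ v = 0 ↔ ∃ c : ℝ, v = fun _ => c)
    (hGpos : ∀ v : Fin n → ℝ, v ≠ 0 → (∑ i, v i) = 0 → 0 < v ⬝ᵥ (G *ᵥ v))
    (hGd : IsMoorePenrose G Gd) (hBd : IsMoorePenrose B Bd)
    (hRd : IsMoorePenrose (G + B * Gd * B) Rd)
    (hXd : IsMoorePenrose (B + G * Bd * G) Xd) :
    Rd * (B * Gd) = Xd := by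
  have hGt : Gᵀ = G := hGsymm
  have hBt : Bᵀ = B := hBsymm
  have hGds : Gdᵀ = Gd := RRPI.mp_symm hGt hGd
  have hBds : Bdᵀ = Bd := RRPI.mp_symm hBt hBd
  have hGdc : G * Gd = Gd * G := RRPI.mp_comm hGt hGd
  have hBdc : B * Bd = Bd * B := RRPI.mp_comm hBt hBd
  have hPt : (Gd * G)ᵀ = Gd * G := hGd.2.2.2
  -- constant vector facts
  have hG1 : G *ᵥ (fun _ => (1:ℝ)) = 0 := (hGker _).mpr ⟨1, rfl⟩
  have hB1 : B *ᵥ (fun _ => (1:ℝ)) = 0 := (hBker _).mpr ⟨1, rfl⟩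
  have comp0 : ∀ (M N : Matrix (Fin n) (Fin n) ℝ),
      N *ᵥ (fun _ => (1:ℝ)) = 0 → (M * N) *ᵥ (fun _ => (1:ℝ)) = 0 := by
    intro M N h
    rw [← mulVec_mulVec, h, mulVec_zero]
  have hP1 : (Gd * G) *ᵥ (fun _ => (1:ℝ)) = 0 := comp0 _ _ hG1
  have hQ1 : (Bd * B) *ᵥ (fun _ => (1:ℝ)) = 0 := comp0 _ _ hB1
  have hGd1 : Gd *ᵥ (fun _ => (1:ℝ)) = 0 := by
    have e : Gd * (G * Gd) = Gd := by rw [← mul_assoc]; exact hGd.2.1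
    calc Gd *ᵥ (fun _ => (1:ℝ)) = (Gd * (G * Gd)) *ᵥ (fun _ => (1:ℝ)) := by rw [e]
      _ = 0 := by rw [hGdc]; exact comp0 _ _ hP1
  -- absorption instances
  have AbG : ∀ M : Matrix (Fin n) (Fin n) ℝ, M *ᵥ (fun _ => (1:ℝ)) = 0 →
      M * (Gd * G) = M :=
    fun M hM => RRPI.absorb hGd.1 (fun v h => (hGker v).mp h) hM
  have AbB : ∀ M : Matrix (Fin n) (Fin n) ℝ, M *ᵥ (fun _ => (1:ℝ)) = 0 →
      M * (Bd * B) = M :=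
    fun M hM => RRPI.absorb hBd.1 (fun v h => (hBker v).mp h) hM
  -- Bd * B = Gd * G
  have hQP : (Bd * B) * (Gd * G) = Bd * B := AbG _ hQ1
  have hPQ : (Gd * G) * (Bd * B) = Gd * G := AbB _ hP1
  have hQt : (Bd * B)ᵀ = Bd * B := hBd.2.2.2
  have hQPeq : Bd * B = Gd * G := by
    calc Bd * B = (Bd * B) * (Gd * G) := hQP.symm
      _ = (Bd * B)ᵀ * (Gd * G)ᵀ := by rw [hQt, hPt]
      _ = ((Gd * G) * (Bd * B))ᵀ := (transpose_mul _ _).symm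
      _ = (Gd * G)ᵀ := by rw [hPQ]
      _ = Gd * G := hPt
  -- the R matrix
  have hRt : (G + B * Gd * B)ᵀ = G + B * Gd * B := by
    rw [transpose_add, transpose_mul, transpose_mul, hGt, hBt, hGds, mul_assoc]
  have hR1 : (G + B * Gd * B) *ᵥ (fun _ => (1:ℝ)) = 0 := by
    rw [add_mulVec, hG1, comp0 (B * Gd) B hB1, add_zero]
  -- Gd is positive semidefinite
  have hGdpsd : ∀ w : Fin n → ℝ, 0 ≤ w ⬝ᵥ (Gd *ᵥ w) := by
    intro w
    have e : w ⬝ᵥ (Gd *ᵥ w) = (Gd *ᵥ w) ⬝ᵥ (G *ᵥ (Gd *ᵥ w)) := by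
      calc w ⬝ᵥ (Gd *ᵥ w) = w ⬝ᵥ ((Gd * G * Gd) *ᵥ w) := by rw [hGd.2.1]
        _ = w ⬝ᵥ (Gd *ᵥ (G *ᵥ (Gd *ᵥ w))) := by
            rw [mulVec_mulVec, mulVec_mulVec]
        _ = (Gd *ᵥ w) ⬝ᵥ (G *ᵥ (Gd *ᵥ w)) := RRPI.dot_symm hGds _ _
    rw [e]
    by_cases hz : Gd *ᵥ w = 0
    · rw [hz]; simp
    · refine le_of_lt (hGpos _ hz ?_)
      have hss : ∑ i, (Gd *ᵥ w) i = (fun _ => (1:ℝ)) ⬝ᵥ (Gd *ᵥ w) := by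
        simp [dotProduct]
      rw [hss, RRPI.dot_symm hGds, hGd1, zero_dotProduct]
  -- kernel of R is the constants
  have hRker : ∀ v, (G + B * Gd * B) *ᵥ v = 0 → ∃ c : ℝ, v = fun _ => c := by
    intro v hv
    have hdot : v ⬝ᵥ (G *ᵥ v) + (B *ᵥ v) ⬝ᵥ (Gd *ᵥ (B *ᵥ v)) = 0 := by
      have h0 : v ⬝ᵥ ((G + B * Gd * B) *ᵥ v) = 0 := by rw [hv, dotProduct_zero]
      rw [add_mulVec, dotProduct_add] at h0
      have e : v ⬝ᵥ ((B * Gd * B) *ᵥ v) = (B *ᵥ v) ⬝ᵥ (Gd *ᵥ (B *ᵥ v)) := by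
        calc v ⬝ᵥ ((B * Gd * B) *ᵥ v) = v ⬝ᵥ (B *ᵥ (Gd *ᵥ (B *ᵥ v))) := by
              rw [mulVec_mulVec, mulVec_mulVec]
          _ = (B *ᵥ v) ⬝ᵥ (Gd *ᵥ (B *ᵥ v)) := RRPI.dot_symm hBt _ _
      rw [e] at h0
      exact h0
    have hGP' : G * (Gd * G) = G := by rw [← mul_assoc]; exact hGd.1
    have hGu : G *ᵥ v = G *ᵥ ((Gd * G) *ᵥ v) := by
      rw [mulVec_mulVec, hGP']
    have huz : (Gd * G) *ᵥ v = 0 := by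
      by_contra hne
      have hsum : ∑ i, ((Gd * G) *ᵥ v) i = 0 := by
        have hss : ∑ i, ((Gd * G) *ᵥ v) i = (fun _ => (1:ℝ)) ⬝ᵥ ((Gd * G) *ᵥ v) := by
          simp [dotProduct]
        rw [hss, RRPI.dot_symm hPt, hP1, zero_dotProduct]
      have hpos : 0 < ((Gd * G) *ᵥ v) ⬝ᵥ (G *ᵥ ((Gd * G) *ᵥ v)) :=
        hGpos _ hne hsum
      have heq : v ⬝ᵥ (G *ᵥ v) = ((Gd * G) *ᵥ v) ⬝ᵥ (G *ᵥ ((Gd * G) *ᵥ v)) := by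
        calc v ⬝ᵥ (G *ᵥ v) = v ⬝ᵥ (G *ᵥ ((Gd * G) *ᵥ v)) := by rw [← hGu]
          _ = (G *ᵥ v) ⬝ᵥ ((Gd * G) *ᵥ v) := RRPI.dot_symm hGt _ _
          _ = (G *ᵥ ((Gd * G) *ᵥ v)) ⬝ᵥ ((Gd * G) *ᵥ v) := by rw [← hGu]
          _ = ((Gd * G) *ᵥ v) ⬝ᵥ (G *ᵥ ((Gd * G) *ᵥ v)) := dotProduct_comm _ _
      have h2 := hGdpsd (B *ᵥ v)
      rw [heq] at hdot
      linarith
    apply (hGker v).mp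
    rw [hGu, huz, mulVec_zero]
  -- abbreviate R
  set R : Matrix (Fin n) (Fin n) ℝ := G + B * Gd * B with hRdef
  -- Rd facts
  have hRds : Rdᵀ = Rd := RRPI.mp_symm hRt hRd
  have hRdc : R * Rd = Rd * R := RRPI.mp_comm hRt hRd
  have AbR : ∀ M : Matrix (Fin n) (Fin n) ℝ, M *ᵥ (fun _ => (1:ℝ)) = 0 →
      M * (Rd * R) = M :=
    fun M hM => RRPI.absorb hRd.1 hRker hM
  have hS1 : (Rd * R) *ᵥ (fun _ => (1:ℝ)) = 0 := comp0 _ _ hR1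
  have hSP : (Rd * R) * (Gd * G) = Rd * R := AbG _ hS1
  have hPS : (Gd * G) * (Rd * R) = Gd * G := AbR _ hP1
  have hSt : (Rd * R)ᵀ = Rd * R := hRd.2.2.2
  have hSPeq : Rd * R = Gd * G := by
    calc Rd * R = (Rd * R) * (Gd * G) := hSP.symm
      _ = (Rd * R)ᵀ * (Gd * G)ᵀ := by rw [hSt, hPt]
      _ = ((Gd * G) * (Rd * R))ᵀ := (transpose_mul _ _).symm
      _ = (Gd * G)ᵀ := by rw [hPS]
      _ = Gd * G := hPt
  -- transpose helper: right absorption → left absorption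
  have tp : ∀ M : Matrix (Fin n) (Fin n) ℝ, Mᵀ = M → M * (Gd * G) = M →
      (Gd * G) * M = M := by
    intro M hMt hMP
    calc (Gd * G) * M = (Gd * G)ᵀ * Mᵀ := by rw [hPt, hMt]
      _ = (M * (Gd * G))ᵀ := (transpose_mul _ _).symm
      _ = Mᵀ := by rw [hMP]
      _ = M := hMt
  -- absorption table
  have hBP : B * (Gd * G) = B := AbG _ hB1
  have hPB : (Gd * G) * B = B := tp _ hBt hBP
  have hGP : G * (Gd * G) = G := by rw [← mul_assoc]; exact hGd.1
  have hPG : (Gd * G) * G = G := tp _ hGt hGP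
  have hRP : R * (Gd * G) = R := AbG _ hR1
  have hPR : (Gd * G) * R = R := tp _ hRt hRP
  have hPGd : (Gd * G) * Gd = Gd := hGd.2.1
  have hPBd : (Gd * G) * Bd = Bd := by rw [← hQPeq]; exact hBd.2.1
  have hPRd : (Gd * G) * Rd = Rd := by rw [← hSPeq]; exact hRd.2.1
  have hRRd : R * Rd = Gd * G := hRdc.trans hSPeq
  have hBBd : B * Bd = Gd * G := hBdc.trans hQPeq
  -- lifting helper
  have lift : ∀ (A₁ A₂ A₃ : Matrix (Fin n) (Fin n) ℝ), A₁ * A₂ = A₃ →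
      ∀ t : Matrix (Fin n) (Fin n) ℝ, A₁ * (A₂ * t) = A₃ * t :=
    fun A₁ A₂ A₃ h t => by rw [← mul_assoc, h]
  -- X = G * Bd * R
  have key : G * Bd * (B * Gd * B) = B := by
    simp only [mul_assoc]
    rw [lift Bd B (Gd * G) hQPeq, lift (Gd * G) Gd Gd hPGd,
      lift G Gd (Gd * G) hGdc, hPB]
  have hXeq : G * Bd * R = B + G * Bd * G := by
    rw [hRdef, mul_add, key, add_comm]
  -- the Penrose conditions for the candidate
  have hXY : (B + G * Bd * G) * (Rd * (B * Gd)) = Gd * G := by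
    rw [← hXeq]
    simp only [mul_assoc]
    rw [lift R Rd (Gd * G) hRRd, lift (Gd * G) B B hPB,
      lift Bd B (Gd * G) hQPeq, hPGd]
    exact hGdc
  have hYX : (Rd * (B * Gd)) * (B + G * Bd * G) = Gd * G := by
    rw [← hXeq]
    simp only [mul_assoc]
    rw [lift Gd G (Gd * G) rfl, lift (Gd * G) Bd Bd hPBd,
      lift B Bd (Gd * G) hBBd, hPR]
    exact hSPeq
  have hPX2 : (Gd * G) * (G * Bd * G) = G * Bd * G := by
    simp only [mul_assoc]
    rw [lift Gd G (Gd * G) rfl, lift (Gd * G) G G hPG]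
  have hPX : (Gd * G) * (B + G * Bd * G) = B + G * Bd * G := by
    rw [mul_add, hPB, hPX2]
  have hPY : (Gd * G) * (Rd * (B * Gd)) = Rd * (B * Gd) := by
    rw [← mul_assoc, hPRd]
  have hMP : IsMoorePenrose (B + G * Bd * G) (Rd * (B * Gd)) := by
    refine ⟨?_, ?_, ?_, ?_⟩
    · rw [hXY, hPX]
    · rw [hYX, hPY]
    · rw [hXY]; exact hPt
    · rw [hYX]; exact hPt
  exact RRPI.mp_unique hMP hXd
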